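/- Assume P is the identity matrix and X_{i,j} = 0 whenever dist(i,j) > R. For all i, j ∈ L and all t ∈ ℝ, writing a_{i,j} = max{0, ⌈d_{i,j}−1⌉}, one has |C^{pp}_{i,j}(t)| ≤ √‖X‖ · τ^{2a_{i,j}+1} · cosh(τ)/(2a_{i,j}+1)!. -/

import Mathlib

/-- The ℓ²→ℓ² operator norm of a real matrix. -/
noncomputable def l2OpNorm {V : Type*} [Fintype V] [DecidableEq V] (M : Matrix V V ℝ) : ℝ :=
  ‖Matrix.toEuclideanCLM (𝕜 := ℝ) M‖

/-- For `P = 𝟙`: `C^{pp}_{i,j}(t) = ∑_{n≥0} (−1)^n t^{2n+1} (X^{n+1})_{i,j}/(2n+1)!`,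
which equals `i[p̂_i(t), p̂_j]`. -/
noncomputable def Cpp {V : Type*} [Fintype V] [DecidableEq V]
    (X : Matrix V V ℝ) (i j : V) (t : ℝ) : ℝ :=
  ∑' n : ℕ, (-1 : ℝ) ^ n * t ^ (2 * n + 1) * ((X ^ (n + 1)) i j) / (Nat.factorial (2 * n + 1))

open Matrix in
lemma entry_abs_le_l2OpNorm {V : Type*} [Fintype V] [DecidableEq V]
    (M : Matrix V V ℝ) (i j : V) : |M i j| ≤ l2OpNorm M := by
  set v : EuclideanSpace ℝ V := (WithLp.equiv 2 (V → ℝ)).symm (Pi.single j 1) with hv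
  set w : EuclideanSpace ℝ V := Matrix.toEuclideanCLM (𝕜 := ℝ) M v with hw
  have hw2 : w = (WithLp.equiv 2 (V → ℝ)).symm (M *ᵥ Pi.single j 1) :=
    Matrix.toEuclideanCLM_toLp (𝕜 := ℝ) M (Pi.single j 1)
  have hwi : w i = M i j := by
    rw [hw2]; simp [Matrix.mulVec_single]
  have h1 : |w i| ≤ ‖w‖ := by
    rw [EuclideanSpace.norm_eq, ← Real.sqrt_sq_eq_abs]
    apply Real.sqrt_le_sqrt
    have := Finset.single_le_sum (f := fun k => ‖w k‖ ^ 2)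
      (fun k _ => by positivity) (Finset.mem_univ i)
    simpa [Real.norm_eq_abs, sq_abs] using this
  have h2 : ‖w‖ ≤ ‖Matrix.toEuclideanCLM (𝕜 := ℝ) M‖ * ‖v‖ :=
    (Matrix.toEuclideanCLM (𝕜 := ℝ) M).le_opNorm _
  have h3 : ‖v‖ = 1 := by
    have hv' : v = EuclideanSpace.single j (1:ℝ) := rfl
    rw [hv', EuclideanSpace.norm_single]; norm_num
  rw [← hwi]
  exact h1.trans (by rw [h3, mul_one] at h2; exact h2)

lemma pow_entry_abs_le {V : Type*} [Fintype V] [DecidableEq V]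
    (M : Matrix V V ℝ) (n : ℕ) (i j : V) :
    |(M ^ (n + 1)) i j| ≤ (l2OpNorm M) ^ (n + 1) := by
  refine (entry_abs_le_l2OpNorm _ i j).trans ?_
  show ‖Matrix.toEuclideanCLM (𝕜 := ℝ) (M ^ (n+1))‖ ≤ ‖Matrix.toEuclideanCLM (𝕜 := ℝ) M‖ ^ (n+1)
  rw [map_pow]
  exact norm_pow_le' _ n.succ_pos

/-- **Lieb-Robinson bound for local couplings and `P = 𝟙`**, `pp` commutator:
`|C^{pp}_{i,j}(t)| ≤ √‖X‖ · τ^{2a+1} · cosh τ / (2a+1)!` with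
`a = max{0, ⌈dist(i,j)/R − 1⌉}` and `τ = √‖X‖·|t|`. -/
theorem lieb_robinson_local_P_one_pp {V : Type*} [Fintype V] [DecidableEq V]
    (G : SimpleGraph V) (hconn : G.Connected) (R : ℕ) (hR : 1 ≤ R)
    (X : Matrix V V ℝ) (hX : X.IsSymm)
    (hXloc : ∀ i j : V, R < G.dist i j → X i j = 0)
    (i j : V) (t : ℝ) :
    let τ : ℝ := Real.sqrt (l2OpNorm X) * |t|
    let a : ℕ := (max 0 ⌈(G.dist i j : ℝ) / R - 1⌉).toNat
    |Cpp X i j t| ≤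
      Real.sqrt (l2OpNorm X) * τ ^ (2 * a + 1) * Real.cosh τ / (Nat.factorial (2 * a + 1)) := by
  intro τ a
  classical
  set s : ℝ := Real.sqrt (l2OpNorm X) with hs
  have hXnn : (0:ℝ) ≤ l2OpNorm X := norm_nonneg _
  have hs2 : s ^ 2 = l2OpNorm X := Real.sq_sqrt hXnn
  have hsnn : (0:ℝ) ≤ s := Real.sqrt_nonneg _
  have hτdef : τ = s * |t| := rfl
  have hτnn : (0:ℝ) ≤ τ := by rw [hτdef]; positivity
  -- locality of powers
  have hrange : ∀ m : ℕ, ∀ p q : V, m * R < G.dist p q → (X ^ m) p q = 0 := by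
    intro m
    induction m with
    | zero =>
      intro p q h
      have hne : p ≠ q := by
        rintro rfl; simp [SimpleGraph.dist_self] at h
      simp [Matrix.one_apply_ne hne]
    | succ m ih =>
      intro p q h
      rw [pow_succ, Matrix.mul_apply]
      apply Finset.sum_eq_zero
      intro k _
      by_cases h1 : m * R < G.dist p k
      · rw [ih p k h1, zero_mul]
      · by_cases h2 : R < G.dist k q
        · rw [hXloc k q h2, mul_zero]
        · exfalso
          push_neg at h1 h2
          have htri := hconn.dist_triangle (u := p) (v := k) (w := q)
          have : (m + 1) * R = m * R + R := by ring
          omega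
  -- vanishing of the first `a` terms
  have hzero : ∀ n : ℕ, n < a → (X ^ (n + 1)) i j = 0 := by
    intro n hn
    apply hrange
    set c : ℤ := ⌈(G.dist i j : ℝ) / R - 1⌉ with hc
    have haz : (a : ℤ) = max 0 c := Int.toNat_of_nonneg (le_max_left 0 c)
    have hnc : (n : ℤ) < c := by
      have : (n : ℤ) < (a : ℤ) := by exact_mod_cast hn
      rw [haz] at this
      rcases le_or_gt c 0 with hc0 | hc0
      · omega
      · omega
    have hR0 : (0:ℝ) < (R:ℝ) := by exact_mod_cast hR
    have hceil : ((n:ℝ) + 1) ≤ (c : ℝ) := by exact_mod_cast hnc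
    have hlt : (c : ℝ) < (G.dist i j : ℝ) / R := by
      have := Int.ceil_lt_add_one ((G.dist i j : ℝ) / R - 1)
      rw [sub_add_cancel] at this
      exact this
    have hfin : ((n:ℝ) + 1) * R < (G.dist i j : ℝ) := by
      rw [← lt_div_iff₀ hR0]
      exact hceil.trans_lt hlt
    exact_mod_cast hfin
  -- the summand
  set f : ℕ → ℝ := fun n =>
    (-1 : ℝ) ^ n * t ^ (2 * n + 1) * ((X ^ (n + 1)) i j) / (Nat.factorial (2 * n + 1)) with hf
  -- termwise bound
  have hfb : ∀ n : ℕ, |f n| ≤ s * τ ^ (2 * n + 1) / (Nat.factorial (2 * n + 1)) := by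
    intro n
    have habs : |f n| = |t| ^ (2 * n + 1) * |(X ^ (n + 1)) i j| /
        (Nat.factorial (2 * n + 1)) := by
      rw [hf]
      rw [abs_div, abs_mul, abs_mul, abs_pow, abs_pow, abs_neg, abs_one, one_pow, one_mul,
        Nat.abs_cast]
    have hkey : s * τ ^ (2 * n + 1) = |t| ^ (2 * n + 1) * (l2OpNorm X) ^ (n + 1) := by
      have : s * τ ^ (2 * n + 1) = (s ^ 2) ^ (n + 1) * |t| ^ (2 * n + 1) := by
        rw [hτdef, mul_pow, ← pow_mul]
        ring
      rw [this, hs2]; ring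
    rw [habs, hkey]
    have hfactpos : (0:ℝ) < (Nat.factorial (2 * n + 1) : ℝ) := by
      exact_mod_cast Nat.factorial_pos _
    gcongr
    exact pow_entry_abs_le X n i j
  -- dominating series
  have hcosh := Real.hasSum_cosh τ
  set C : ℝ := s * τ ^ (2 * a + 1) / (Nat.factorial (2 * a + 1)) with hC
  have hCnn : 0 ≤ C := by
    have : (0:ℝ) < (Nat.factorial (2 * a + 1) : ℝ) := by exact_mod_cast Nat.factorial_pos _
    positivity
  set g : ℕ → ℝ := fun m => C * (τ ^ (2 * m) / (Nat.factorial (2 * m))) with hg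
  have hgsum : Summable g := (hcosh.summable).mul_left C
  have hfg : ∀ m : ℕ, |f (m + a)| ≤ g m := by
    intro m
    refine (hfb (m + a)).trans ?_
    have hpow : τ ^ (2 * (m + a) + 1) = τ ^ (2 * a + 1) * τ ^ (2 * m) := by
      rw [← pow_add]; ring_nf
    have hfact : ((Nat.factorial (2 * a + 1) * Nat.factorial (2 * m) : ℕ) : ℝ) ≤
        ((Nat.factorial (2 * (m + a) + 1) : ℕ) : ℝ) := by
      have hdvd := Nat.factorial_mul_factorial_dvd_factorial_add (2 * a + 1) (2 * m)
      have heq : 2 * a + 1 + 2 * m = 2 * (m + a) + 1 := by ring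
      rw [heq] at hdvd
      exact_mod_cast Nat.le_of_dvd (Nat.factorial_pos _) hdvd
    have hnum : (0:ℝ) ≤ s * τ ^ (2 * (m + a) + 1) := by positivity
    have hd1 : (0:ℝ) < ((Nat.factorial (2 * a + 1) * Nat.factorial (2 * m) : ℕ) : ℝ) := by
      exact_mod_cast Nat.mul_pos (Nat.factorial_pos _) (Nat.factorial_pos _)
    calc s * τ ^ (2 * (m + a) + 1) / (Nat.factorial (2 * (m + a) + 1))
        ≤ s * τ ^ (2 * (m + a) + 1) /
          ((Nat.factorial (2 * a + 1) * Nat.factorial (2 * m) : ℕ) : ℝ) :=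
          div_le_div_of_nonneg_left hnum hd1 hfact
      _ = g m := by
          rw [hg, hC, hpow]
          push_cast
          ring
  have habs_sum : Summable fun m => |f (m + a)| :=
    Summable.of_nonneg_of_le (fun m => abs_nonneg _) hfg hgsum
  have hfs : Summable fun m => f (m + a) := habs_sum.of_abs
  -- reindexing
  have hre : ∑' m : ℕ, f (m + a) = ∑' n : ℕ, f n := by
    apply Function.Injective.tsum_eq (g := fun m : ℕ => m + a)
    · exact add_left_injective a
    · intro n hn
      rcases le_or_gt a n with h | h
      · exact ⟨n - a, Nat.sub_add_cancel h⟩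
      · exact absurd (by simp [hf, hzero n h] : f n = 0) hn
  have hCpp : Cpp X i j t = ∑' n : ℕ, f n := rfl
  calc |Cpp X i j t| = |∑' m : ℕ, f (m + a)| := by rw [hCpp, hre]
    _ ≤ ∑' m : ℕ, |f (m + a)| := by
        simpa [Real.norm_eq_abs] using norm_tsum_le_tsum_norm (f := fun m => f (m + a))
          (by simpa [Real.norm_eq_abs] using habs_sum)
    _ ≤ ∑' m : ℕ, g m := habs_sum.tsum_le_tsum hfg hgsum
    _ = C * Real.cosh τ := by rw [hg, tsum_mul_left, hcosh.tsum_eq]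
    _ = s * τ ^ (2 * a + 1) * Real.cosh τ / (Nat.factorial (2 * a + 1)) := by
        rw [hC]; ring
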